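/- For rational numbers b and c, the product (b²c⁴ - 6b²c³ + 13b²c² - 12b²c + 4b² + c²)·(bc - 1 - b)·(bc - c - 2b) equals zero if and only if (b,c) = (0,0), or (c ≠ 1 and b = 1/(c-1)), or (c ≠ 2 and b = c/(c-2)). -/

import Mathlib

theorem stmt_14 (b c : ℚ) :
    (b^2*c^4 - 6*b^2*c^3 + 13*b^2*c^2 - 12*b^2*c + 4*b^2 + c^2) * (b*c - 1 - b) *
      (b*c - c - 2*b) = 0 ↔
    (b = 0 ∧ c = 0) ∨ (c ≠ 1 ∧ b = 1/(c - 1)) ∨ (c ≠ 2 ∧ b = c/(c - 2)) := by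
  rw [mul_eq_zero, mul_eq_zero]
  constructor
  · rintro ((h | h) | h)
    · left
      have key : (b*(c^2 - 3*c + 2))^2 + c^2 = 0 := by ring_nf; ring_nf at h; linarith
      have hc : c = 0 := by nlinarith [sq_nonneg (b*(c^2 - 3*c + 2)), sq_nonneg c]
      have hb : b = 0 := by
        subst hc
        nlinarith [sq_nonneg (b*(0^2 - 3*0 + 2))]
      exact ⟨hb, hc⟩
    · right; left
      have hc : c ≠ 1 := by rintro rfl; simp at h
      refine ⟨hc, ?_⟩
      have h1 : c - 1 ≠ 0 := sub_ne_zero.mpr hc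
      field_simp
      linarith
    · right; right
      have hc : c ≠ 2 := by rintro rfl; nlinarith
      refine ⟨hc, ?_⟩
      have h1 : c - 2 ≠ 0 := sub_ne_zero.mpr hc
      field_simp
      linarith
  · rintro (⟨rfl, rfl⟩ | ⟨hc, rfl⟩ | ⟨hc, rfl⟩)
    · left; left; ring
    · left; right
      have h1 : c - 1 ≠ 0 := sub_ne_zero.mpr hc
      field_simp
      ring
    · right
      have h1 : c - 2 ≠ 0 := sub_ne_zero.mpr hc
      field_simp
      ring
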